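/- Let (Ω, ℱ, μ) be a probability space, 𝒢 a sub-σ-algebra of ℱ, and let M, ε : Ω → ℝ^d be integrable random vectors. Fix σ > 0 and set X := M + σ•ε; assume X is 𝒢-measurable. Let ᾱ := 1/(σ² + 1) and Y := √ᾱ • X. Then μ-almost everywhere, (1/√ᾱ) • (Y − √(1 − ᾱ) • μ[ε | 𝒢]) = X − σ • μ[ε | 𝒢] = μ[M | 𝒢]. That is, applying Tweedie's formula to the SNR-matched VP variable Y recovers the correct posterior-mean signal predictor for the SB variable X. -/

import Mathlib

open MeasureTheory

/-- Applying Tweedie's formula to the SNR-matched VP variable `Y = √ᾱ • X`, where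
`X = M + σ•ε` is 𝒢-measurable and `ᾱ = 1/(σ² + 1)`, recovers the correct posterior-mean
signal predictor: μ-a.e.,
`(1/√ᾱ) • (Y − √(1−ᾱ) • μ[ε|𝒢]) = X − σ • μ[ε|𝒢] = μ[M|𝒢]`. -/
theorem tweedie_snr_matched_recovers_signal
    {Ω : Type*} {d : ℕ} [ℱ : MeasurableSpace Ω] {μ : Measure Ω} [IsProbabilityMeasure μ]
    (𝒢 : MeasurableSpace Ω) (h𝒢 : 𝒢 ≤ ℱ)
    (M ε : Ω → EuclideanSpace ℝ (Fin d))
    (hM : Integrable M μ) (hε : Integrable ε μ)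
    (σ : ℝ) (hσ : 0 < σ)
    (X : Ω → EuclideanSpace ℝ (Fin d)) (hX : X = fun ω => M ω + σ • ε ω)
    (hXmeas : StronglyMeasurable[𝒢] X)
    (abar : ℝ) (habar : abar = 1 / (σ ^ 2 + 1))
    (Y : Ω → EuclideanSpace ℝ (Fin d)) (hY : Y = fun ω => Real.sqrt abar • X ω) :
    ∀ᵐ ω ∂μ,
      (1 / Real.sqrt abar) • (Y ω - Real.sqrt (1 - abar) • (μ[ε | 𝒢]) ω)
          = X ω - σ • (μ[ε | 𝒢]) ω
        ∧ X ω - σ • (μ[ε | 𝒢]) ω = (μ[M | 𝒢]) ω := by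
  have hden : (0:ℝ) < σ ^ 2 + 1 := by positivity
  have habar_pos : 0 < abar := by rw [habar]; positivity
  have hsa : Real.sqrt abar ≠ 0 := by positivity
  have h1mab : 1 - abar = σ ^ 2 * abar := by
    rw [habar]; field_simp; ring
  have hsqrt1 : Real.sqrt (1 - abar) = σ * Real.sqrt abar := by
    rw [h1mab, Real.sqrt_mul (by positivity), Real.sqrt_sq hσ.le]
  have hc1 : (1 / Real.sqrt abar) * Real.sqrt abar = 1 := by
    field_simp
  have hc2 : (1 / Real.sqrt abar) * Real.sqrt (1 - abar) = σ := by
    rw [hsqrt1]; field_simp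
  have hXint : Integrable X μ := by
    rw [hX]; exact hM.add (hε.smul σ)
  have hMeq : M = fun ω => X ω - σ • ε ω := by
    funext ω; rw [hX]; simp
  have hcondX : μ[X | 𝒢] = X := condExp_of_stronglyMeasurable h𝒢 hXmeas hXint
  have hcond : μ[M | 𝒢] =ᵐ[μ] fun ω => X ω - σ • (μ[ε | 𝒢]) ω := by
    rw [hMeq]
    refine (condExp_sub hXint (hε.smul σ) 𝒢).trans ?_
    have hsm : μ[σ • ε | 𝒢] =ᵐ[μ] σ • μ[ε | 𝒢] := condExp_smul σ ε 𝒢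
    rw [hcondX]
    filter_upwards [hsm] with ω hω
    simp [Pi.sub_apply, hω]
  filter_upwards [hcond] with ω hω
  constructor
  · rw [hY]
    rw [smul_sub, smul_smul, smul_smul, hc1, hc2, one_smul]
  · rw [hω]
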